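/- Let X be a compact Riemann surface of genus g ≥ 2, {ω_i} an orthonormal basis of H⁰(K_X) with ω_j = f_j(z)dz locally, and let ξ_P, ξ_{P'} be Schiffer variations at points P, P' ∈ X (for chosen local coordinates). Then, with respect to the Hermitian product on S²(H^{0,1}(X)) induced by the Hodge metric, ⟨ξ_P, ξ_{P'}⟩ = 8π² (α_{P,P'})², where α_{P,P'} = Σ_{i=1}^g f_i(P) \overline{f_i(P')}. -/
import Mathlib


open TensorProduct Real

/-- The symmetric product `a ⊙ b`, viewed inside `H ⊗ H` via `a ⊙ b ↦ ½(a ⊗ b + b ⊗ a)`. -/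
noncomputable def symProd {H : Type*} [AddCommGroup H] [Module ℂ H] (a b : H) :
    H ⊗[ℂ] H :=
  (1 / 2 : ℂ) • (a ⊗ₜ[ℂ] b + b ⊗ₜ[ℂ] a)

lemma Tsym {H01 : Type} [AddCommGroup H01] [Module ℂ H01]
    (pair01 : H01 →ₗ[ℂ] H01 →ₛₗ[starRingEnd ℂ] ℂ)
    (T : (H01 ⊗[ℂ] H01) →ₗ[ℂ] (H01 ⊗[ℂ] H01) →ₛₗ[starRingEnd ℂ] ℂ)
    (hT : ∀ a b c d : H01,
      T (a ⊗ₜ[ℂ] b) (c ⊗ₜ[ℂ] d) = 2 * pair01 a c * pair01 b d)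
    (a b c d : H01) :
    T (symProd a b) (symProd c d)
      = pair01 a c * pair01 b d + pair01 a d * pair01 b c := by
  simp only [symProd, map_smul, map_add, LinearMap.smul_apply, LinearMap.add_apply,
    map_smulₛₗ, hT, smul_eq_mul]
  have : (starRingEnd ℂ) (1/2 : ℂ) = 1/2 := by
    rw [map_div₀, map_one, map_ofNat]
  rw [this]
  ring

/-!
STATEMENT 2: `⟨ξ_P, ξ_{P'}⟩ = 8π² (α_{P,P'})²` where
`α_{P,P'} = ∑_i f_i(P) conj (f_i(P'))`, for the Hermitian product on `S²(H^{0,1}(X))`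
determined by `⟨a ⊗ b, c ⊗ d⟩ = 2⟨a,c⟩⟨b,d⟩`, with `⟨ω̄_i, ω̄_j⟩ = -δ_{ij}` and
`ξ_P = 2π ∑_{i,j} f_i(P) f_j(P) (ω̄_i ⊙ ω̄_j)` (and likewise for `P'`).
-/
theorem schiffer_variations_scalar_product
    (g : ℕ) (hg : 2 ≤ g)
    (H01 : Type) [AddCommGroup H01] [Module ℂ H01]
    -- the Hodge hermitian product on H^{0,1}(X), with ⟨ω̄_i, ω̄_j⟩ = -δ_{ij}
    (pair01 : H01 →ₗ[ℂ] H01 →ₛₗ[starRingEnd ℂ] ℂ)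
    (omegaBar : Fin g → H01)
    (hconj : ∀ i j, pair01 (omegaBar i) (omegaBar j) = -(if i = j then 1 else 0))
    -- the induced Hermitian product on S²H^{0,1} ⊂ H^{0,1} ⊗ H^{0,1}:
    -- ⟨a ⊗ b, c ⊗ d⟩ = 2 ⟨a,c⟩⟨b,d⟩
    (T : (H01 ⊗[ℂ] H01) →ₗ[ℂ] (H01 ⊗[ℂ] H01) →ₛₗ[starRingEnd ℂ] ℂ)
    (hT : ∀ a b c d : H01,
      T (a ⊗ₜ[ℂ] b) (c ⊗ₜ[ℂ] d) = 2 * pair01 a c * pair01 b d)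
    -- local coefficients f_i(P), f_i(P') of the orthonormal basis at P and P'
    (fP fP' : Fin g → ℂ)
    -- the Schiffer variations ξ_P, ξ_{P'} in S²(H^{0,1}(X))
    (xiP xiP' : H01 ⊗[ℂ] H01)
    (hxiP : xiP
      = (2 * (π : ℂ)) • ∑ i, ∑ j, (fP i * fP j) • symProd (omegaBar i) (omegaBar j))
    (hxiP' : xiP'
      = (2 * (π : ℂ)) • ∑ i, ∑ j, (fP' i * fP' j) • symProd (omegaBar i) (omegaBar j)) :
    T xiP xiP'
      = 8 * (π : ℂ) ^ 2 * (∑ i, fP i * (starRingEnd ℂ) (fP' i)) ^ 2 := by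
  have hπ : (starRingEnd ℂ) (2 * (π : ℂ)) = 2 * (π : ℂ) := by
    rw [map_mul, map_ofNat, Complex.conj_ofReal]
  subst hxiP hxiP'
  simp only [map_smul, map_sum, LinearMap.smul_apply, LinearMap.sum_apply,
    map_smulₛₗ, smul_eq_mul, map_mul, hπ, Finset.mul_sum,
    Tsym pair01 T hT, hconj]
  have hRHS : (∑ i, fP i * (starRingEnd ℂ) (fP' i)) ^ 2
      = ∑ i, ∑ j, (fP i * (starRingEnd ℂ) (fP' i)) * (fP j * (starRingEnd ℂ) (fP' j)) := by
    rw [sq, Finset.sum_mul_sum]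
  rw [hRHS]
  simp only [neg_mul_neg]
  simp only [mul_ite, ite_mul, mul_zero, zero_mul, mul_one, one_mul,
    mul_add, Finset.sum_add_distrib, Finset.sum_ite_eq,
    Finset.sum_ite_eq', Finset.mem_univ, if_true, Finset.mul_sum, Finset.sum_mul]
  rw [← Finset.sum_add_distrib]
  apply Finset.sum_congr rfl
  intro i _
  rw [← Finset.sum_add_distrib]
  apply Finset.sum_congr rfl
  intro j _
  ring
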